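/- Let χ(z)=Σ_{k=0}^{M−1} c_k z^k be a polynomial eigenfunction of H_g = −4J₀² + 2ζJ₊ − 2ζJ₋ + M² + ζ² (with n=M−1) with eigenvalue E. Writing c_k = (−1)^k P_k/( (2ζ)^k k! ), the coefficients P_k satisfy P_{k+1}=(E−b_k)P_k − a_k P_{k−1} with a_k=4k(M−k)ζ² and b_k=4k(M−1−k)+2M−1+ζ², and the truncation at degree M−1 forces P_M(E)=0. -/
import Mathlib


open Polynomial

/-- Let `χ(z) = Σ_{k=0}^{M-1} c_k z^k` be a polynomial eigenfunction of
`H_g = -4J₀² + 2ζJ₊ - 2ζJ₋ + M² + ζ²` (with `n = M-1`) with eigenvalue `E`.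
Writing `c_k = (-1)^k P_k / ((2ζ)^k k!)`, the coefficients `P_k` satisfy
`P_{k+1} = (E - b_k) P_k - a_k P_{k-1}` with `a_k = 4k(M-k)ζ²` and
`b_k = 4k(M-1-k) + 2M - 1 + ζ²`, and the truncation at degree `M-1` forces
`P_M(E) = 0`, i.e. `(E - b_{M-1}) P_{M-1} - a_{M-1} P_{M-2} = 0`. -/
theorem stmt_15 (ζ : ℝ) (hζ : 0 < ζ) (M : ℕ) (hM : 1 ≤ M) (E : ℂ)
    (Jm J0 Jp : Polynomial ℂ → Polynomial ℂ)
    (hJm : ∀ p, Jm p = derivative p)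
    (hJ0 : ∀ p, J0 p = X * derivative p - C (((M : ℂ) - 1) / 2) * p)
    (hJp : ∀ p, Jp p = X ^ 2 * derivative p - C ((M : ℂ) - 1) * (X * p))
    (Hg : Polynomial ℂ → Polynomial ℂ)
    (hHg : ∀ p, Hg p = (-4 : ℂ) • J0 (J0 p) + (2 * (ζ : ℂ)) • Jp p
      - (2 * (ζ : ℂ)) • Jm p + ((M : ℂ) ^ 2 + (ζ : ℂ) ^ 2) • p)
    (χ : Polynomial ℂ) (hχdeg : χ.natDegree ≤ M - 1)
    (heig : Hg χ = C E * χ)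
    (a b : ℕ → ℂ)
    (ha : ∀ k : ℕ, a k = 4 * k * ((M : ℂ) - k) * (ζ : ℂ) ^ 2)
    (hb : ∀ k : ℕ, b k = 4 * k * ((M : ℂ) - 1 - k) + 2 * M - 1 + (ζ : ℂ) ^ 2)
    (P : ℕ → ℂ)
    (hP : ∀ k : ℕ, P k = (-1) ^ k * (2 * (ζ : ℂ)) ^ k * (k.factorial : ℂ)
      * χ.coeff k) :
    (∀ k : ℕ, k < M → P (k + 1) = (E - b k) * P k - a k * P (k - 1)) ∧
      (E - b (M - 1)) * P (M - 1) - a (M - 1) * P (M - 2) = 0 := by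
  have hcM : χ.coeff M = 0 :=
    coeff_eq_zero_of_natDegree_lt (lt_of_le_of_lt hχdeg (by omega))
  have key : ∀ k : ℕ, (Hg χ).coeff k = E * χ.coeff k := by
    intro k; rw [heig, coeff_C_mul]
  have main : ∀ k : ℕ, P (k + 1) = (E - b k) * P k - a k * P (k - 1) := by
    intro k
    have hc := key k
    simp only [hHg, hJ0, hJp, hJm] at hc
    rcases k with _ | _ | j
    · simp only [coeff_add, coeff_sub, coeff_smul, coeff_C_mul, smul_eq_mul, pow_two,
        mul_assoc, coeff_X_mul, coeff_derivative, mul_coeff_zero, coeff_X_zero,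
        coeff_C_zero] at hc
      simp only [hP, ha, hb, Nat.factorial]
      push_cast
      linear_combination hc
    · simp only [coeff_add, coeff_sub, coeff_smul, coeff_C_mul, smul_eq_mul, pow_two,
        mul_assoc, coeff_X_mul, coeff_derivative, mul_coeff_zero, coeff_X_zero] at hc
      norm_num at hc
      simp only [hP, ha, hb, Nat.factorial]
      push_cast
      linear_combination (-(2 * (ζ:ℂ))) * hc
    · simp only [coeff_add, coeff_sub, coeff_smul, coeff_C_mul, smul_eq_mul, pow_two,
        mul_assoc, coeff_X_mul, coeff_derivative, mul_coeff_zero, coeff_X_zero] at hc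
      push_cast at hc
      have e1 : j + 1 + 1 = j + 2 := rfl
      have e2 : j + 2 + 1 = j + 3 := rfl
      rw [e1, e2] at hc
      simp only [hP, ha, hb, Nat.factorial_succ, Nat.add_sub_cancel]
      push_cast
      simp only [pow_succ]
      linear_combination ((-1:ℂ))^j * (2*(ζ:ℂ))^j * (2*(ζ:ℂ)) * (2*(ζ:ℂ)) *
        ((j:ℂ)+2) * ((j:ℂ)+1) * (j.factorial : ℂ) * hc
  have hPM : P M = 0 := by rw [hP, hcM, mul_zero]
  refine ⟨fun k _ => main k, ?_⟩
  have h := main (M - 1)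
  have e : M - 1 + 1 = M := by omega
  have e2 : M - 1 - 1 = M - 2 := by omega
  rw [e, e2, hPM] at h
  exact h.symm
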